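/- (Theorem 1, case i_1 = 1 and i_m = n + m.) Assume no two ghost positions are consecutive, i.e. ι k + 1 < ι (k+1) for all k with k + 1 ≤ m − 1, and assume ι 0 = 1 and ι (m−1) = n + m. Then for every v : ℝ and every w : ℕ → ℝ there exists a multivariate polynomial p : MvPolynomial (Fin (n+m)) ℝ with total degree at most 2*m − 2 such that for every choice of input bits b : ℕ → ℤ with b k ∈ {0,1} for all k and every c implementing the m-plus-bits interface for b, one has v + ∑_{i=1}^{n} w i * (φ* i : ℝ) = MvPolynomial.eval (fun t : Fin (n+m) => ((φ (t + 1)) : ℝ)) p. -/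

import Mathlib

/-- `c` implements the `m`-plus-bits challenge interface for input bits `b`,
with ghost-bit positions `ι 0 < ι 1 < ... < ι (m-1)`, for an `n`-stage PUF. -/
def MPlusBitsInterface (n m : ℕ) (hm : 1 ≤ m) (ι : Fin m → ℕ)
    (b c : ℕ → ℤ) : Prop :=
  (∀ i, 1 ≤ i → i < ι ⟨0, hm⟩ → c i = b i) ∧
  (∀ k (hk : k + 1 ≤ m - 1), ∀ i,
    ι ⟨k, by omega⟩ < i → i < ι ⟨k + 1, by omega⟩ → c (i - (k + 1)) = b i) ∧
  (∀ i, ι ⟨m - 1, by omega⟩ < i → i ≤ n + m → c (i - m) = b i)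

namespace Stmt9Aux

/-- Extension of the ghost position map to `ℕ`. -/
def auxII (m : ℕ) (hm : 1 ≤ m) (ι : Fin m → ℕ) (k : ℕ) : ℕ := ι ⟨min k (m-1), by omega⟩

/-- Number of ghost positions weakly before the shifted index, minus one. -/
def auxK (m : ℕ) (hm : 1 ≤ m) (ι : Fin m → ℕ) (i : ℕ) : ℕ :=
  Nat.findGreatest (fun k => auxII m hm ι k ≤ i + k) (m-1)

theorem hII_eq (m : ℕ) (hm : 1 ≤ m) (ι : Fin m → ℕ) (k : ℕ) (h : k < m) :
    auxII m hm ι k = ι ⟨k, h⟩ := by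
  unfold auxII; congr 1; apply Fin.ext; simp only []; omega

theorem auxK_le (m : ℕ) (hm : 1 ≤ m) (ι : Fin m → ℕ) (i : ℕ) :
    auxK m hm ι i ≤ m - 1 := Nat.findGreatest_le _

theorem auxK_spec (m : ℕ) (hm : 1 ≤ m) (ι : Fin m → ℕ) (i : ℕ)
    (h0 : auxII m hm ι 0 ≤ i) :
    auxII m hm ι (auxK m hm ι i) ≤ i + auxK m hm ι i := by
  have := Nat.findGreatest_spec (P := fun k => auxII m hm ι k ≤ i + k) (n := m - 1)
    (Nat.zero_le _) (by simpa using h0)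
  exact this

theorem auxK_gt (m : ℕ) (hm : 1 ≤ m) (ι : Fin m → ℕ) (i k : ℕ)
    (h1 : auxK m hm ι i < k) (h2 : k ≤ m - 1) :
    i + k < auxII m hm ι k := by
  have := Nat.findGreatest_is_greatest (P := fun k => auxII m hm ι k ≤ i + k) h1 h2
  omega

theorem le_auxK (m : ℕ) (hm : 1 ≤ m) (ι : Fin m → ℕ) (i k : ℕ)
    (h2 : k ≤ m - 1) (h : auxII m hm ι k ≤ i + k) :
    k ≤ auxK m hm ι i := Nat.le_findGreatest h2 h

/-- Variable-index helper. -/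
def auxF (n m : ℕ) (hn : 1 ≤ n) (t : ℕ) : Fin (n+m) := ⟨min t (n+m-1), by omega⟩

theorem auxF_val (n m : ℕ) (hn : 1 ≤ n) (t : ℕ) (h : t ≤ n+m-1) :
    ((auxF n m hn t : Fin (n+m)) : ℕ) = t := by
  unfold auxF; simp only []; omega

end Stmt9Aux

/-- Theorem 1, case i₁ = 1 and i_m = n + m: if no two ghost positions are
consecutive, the argument of the sign function in the APUF response model is,
as a function of the observable feature vector `(φ(1), ..., φ(n+m))`, given by
a multivariate polynomial of total degree at most `2m - 2` (case `i₁ = 1` and `i_m = n + m`). -/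
theorem stmt9 (n m : ℕ) (hn : 1 ≤ n) (hm : 1 ≤ m)
    (ι : Fin m → ℕ) (hmono : StrictMono ι)
    (hfirst : 1 ≤ ι ⟨0, hm⟩) (hlast : ι ⟨m - 1, by omega⟩ ≤ n + m)
    (hnc : ∀ k (hk : k + 1 ≤ m - 1), ι ⟨k, by omega⟩ + 1 < ι ⟨k + 1, by omega⟩)
    (hfirst1 : ι ⟨0, hm⟩ = 1) (hlast1 : ι ⟨m - 1, by omega⟩ = n + m) :
    ∀ (v : ℝ) (w : ℕ → ℝ),
      ∃ p : MvPolynomial (Fin (n + m)) ℝ,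
        p.totalDegree ≤ 2 * m - 2 ∧
        ∀ (b c : ℕ → ℤ), (∀ k, b k = 0 ∨ b k = 1) →
          MPlusBitsInterface n m hm ι b c →
          v + ∑ i ∈ Finset.Icc 1 n,
              w i * ((∏ k ∈ Finset.Icc i n, (2 * c k - 1) : ℤ) : ℝ)
            = MvPolynomial.eval
                (fun t : Fin (n + m) =>
                  ((∏ k ∈ Finset.Icc ((t : ℕ) + 1) (n + m), (2 * b k - 1) : ℤ) : ℝ))
                p := by
  intro v w
  have hm2 : 2 ≤ m := by
    rcases Nat.lt_or_ge m 2 with h | h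
    · exfalso
      have heq : (⟨0, hm⟩ : Fin m) = ⟨m - 1, by omega⟩ := by apply Fin.ext; simp; omega
      rw [heq] at hfirst1
      omega
    · exact h
  have hpfm : m - 1 < m := by omega
  obtain ⟨II, hIIdef⟩ : ∃ f : ℕ → ℕ, f = Stmt9Aux.auxII m hm ι := ⟨_, rfl⟩
  obtain ⟨K, hKdef⟩ : ∃ f : ℕ → ℕ, f = Stmt9Aux.auxK m hm ι := ⟨_, rfl⟩
  have hIIe : ∀ (k : ℕ) (h : k < m), II k = ι ⟨k, h⟩ := by
    rw [hIIdef]; exact fun k h => Stmt9Aux.hII_eq m hm ι k h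
  have hIIj : ∀ j : Fin m, II (j : ℕ) = ι j := fun j => hIIe (j : ℕ) j.isLt
  have hII0 : II 0 = 1 := by rw [hIIe 0 (by omega)]; exact hfirst1
  have hIIlast : II (m-1) = n + m := by rw [hIIe (m-1) hpfm]; exact hlast1
  have hstep1 : ∀ k, k + 1 ≤ m - 1 → II k + 2 ≤ II (k+1) := by
    intro k hk
    rw [hIIe k (by omega), hIIe (k+1) (by omega)]
    exact hnc k hk
  have hmonD : ∀ d a, a + d ≤ m - 1 → II a + 2 * d ≤ II (a + d) := by
    intro d
    induction d with
    | zero => intro a _; simp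
    | succ d ih =>
      intro a h
      have h1 := ih a (by omega)
      have h2 := hstep1 (a + d) (by omega)
      have h3 : a + (d+1) = (a + d) + 1 := by omega
      rw [h3]
      omega
  have hmon : ∀ a b, a ≤ b → b ≤ m - 1 → II a + 2 * (b - a) ≤ II b := by
    intro a b hab hb
    have := hmonD (b - a) a (by omega)
    rw [show a + (b - a) = b from by omega] at this
    exact this
  have hKle : ∀ i, K i ≤ m - 1 := by
    rw [hKdef]; exact fun i => Stmt9Aux.auxK_le m hm ι i
  have hKspec : ∀ i, 1 ≤ i → II (K i) ≤ i + K i := by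
    intro i hi
    rw [hIIdef, hKdef]
    exact Stmt9Aux.auxK_spec m hm ι i (by rw [hIIdef] at hII0; omega)
  have hKgt : ∀ i k, K i < k → k ≤ m - 1 → i + k < II k := by
    intro i k h1 h2
    rw [hIIdef]
    rw [hKdef] at h1
    exact Stmt9Aux.auxK_gt m hm ι i k h1 h2
  have hKge : ∀ i k, k ≤ m - 1 → II k ≤ i + k → k ≤ K i := by
    intro i k hk h
    rw [hKdef]
    refine Stmt9Aux.le_auxK m hm ι i k hk ?_
    rw [hIIdef] at h
    exact h
  have hKlt : ∀ i, 1 ≤ i → i ≤ n → K i + 1 ≤ m - 1 := by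
    intro i h1 h2
    have hsp := hKspec i h1
    have hle := hKle i
    by_contra hcon
    have hkk : K i = m - 1 := by omega
    rw [hkk, hIIlast] at hsp
    omega
  have hKtop : K (n+1) = m - 1 := by
    have hge := hKge (n+1) (m-1) (le_refl _) (by omega)
    have := hKle (n+1)
    omega
  have hσub : ∀ i, 1 ≤ i → i ≤ n → i + K i + 1 ≤ n + m - 1 := by
    intro i h1 h2
    have hk1 : K i + 1 ≤ m - 1 := hKlt i h1 h2
    have hgt := hKgt i (K i + 1) (by omega) hk1
    have h3 := hmon (K i + 1) (m-1) (by omega) (le_refl _)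
    omega
  have hstep2 : ∀ i, 1 ≤ i → i ≤ n →
      (K (i+1) = K i ∧ II (K i + 1) ≠ i + K i + 2) ∨
      (K (i+1) = K i + 1 ∧ II (K i + 1) = i + K i + 2) := by
    intro i h1 h2
    have hk1 : K i + 1 ≤ m - 1 := hKlt i h1 h2
    have hgt := hKgt i (K i + 1) (by omega) hk1
    have hsp := hKspec i h1
    have hsp' := hKspec (i+1) (by omega)
    have hle' := hKle (i+1)
    have hle := hKle i
    by_cases hg : II (K i + 1) = i + K i + 2
    · right
      have hge : K i + 1 ≤ K (i+1) := hKge (i+1) (K i + 1) hk1 (by omega)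
      have hlt : K (i+1) ≤ K i + 1 := by
        by_contra hcon
        push_neg at hcon
        have h4 := hmon (K i + 1) (K (i+1)) (by omega) hle'
        omega
      exact ⟨by omega, hg⟩
    · left
      refine ⟨?_, hg⟩
      have hge : K i ≤ K (i+1) := hKge (i+1) (K i) (by omega) (by omega)
      have hlt : K (i+1) ≤ K i := by
        by_contra hcon
        push_neg at hcon
        have h4 := hmon (K i + 1) (K (i+1)) (by omega) hle'
        omega
      omega
  -- the polynomial
  refine ⟨MvPolynomial.C v + ∑ i ∈ Finset.Icc 1 n, MvPolynomial.C (w i) *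
      (MvPolynomial.X (Stmt9Aux.auxF n m hn (i + K i)) *
       (MvPolynomial.X (Stmt9Aux.auxF n m hn (n + m - 1)) *
        ∏ j ∈ Finset.univ.filter (fun j : Fin m => K i < (j : ℕ) ∧ (j : ℕ) < m - 1),
          (MvPolynomial.X (Stmt9Aux.auxF n m hn (ι j - 1)) *
           MvPolynomial.X (Stmt9Aux.auxF n m hn (ι j))))), ?_, ?_⟩
  · -- total degree bound
    refine le_trans (MvPolynomial.totalDegree_add _ _) (max_le ?_ ?_)
    · simp [MvPolynomial.totalDegree_C]
    · refine le_trans (MvPolynomial.totalDegree_finset_sum _ _) (Finset.sup_le ?_)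
      intro i hi
      have hcard : (Finset.univ.filter
          (fun j : Fin m => K i < (j : ℕ) ∧ (j : ℕ) < m - 1)).card ≤ m - 2 := by
        have h := Finset.card_le_card_of_injOn (fun j : Fin m => (j : ℕ))
          (s := Finset.univ.filter (fun j : Fin m => K i < (j : ℕ) ∧ (j : ℕ) < m - 1))
          (t := Finset.Ioo 0 (m-1))
          (by intro a ha
              simp only [Finset.mem_coe, Finset.mem_filter] at ha
              simp only [Finset.mem_coe, Finset.mem_Ioo]
              omega)
          (by intro a _ b _ hab; exact Fin.val_injective hab)
        rw [Nat.card_Ioo] at h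
        omega
      have hprodle : (∏ j ∈ Finset.univ.filter
            (fun j : Fin m => K i < (j : ℕ) ∧ (j : ℕ) < m - 1),
            (MvPolynomial.X (σ := Fin (n+m)) (R := ℝ) (Stmt9Aux.auxF n m hn (ι j - 1)) *
             MvPolynomial.X (Stmt9Aux.auxF n m hn (ι j)))).totalDegree ≤ 2 * (m - 2) := by
        refine le_trans (MvPolynomial.totalDegree_finset_prod _ _) ?_
        have hpt : ∀ j ∈ Finset.univ.filter
            (fun j : Fin m => K i < (j : ℕ) ∧ (j : ℕ) < m - 1),
            (MvPolynomial.X (σ := Fin (n+m)) (R := ℝ) (Stmt9Aux.auxF n m hn (ι j - 1)) *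
             MvPolynomial.X (Stmt9Aux.auxF n m hn (ι j))).totalDegree ≤ 2 := by
          intro j _
          refine le_trans (MvPolynomial.totalDegree_mul _ _) ?_
          rw [MvPolynomial.totalDegree_X, MvPolynomial.totalDegree_X]
        refine le_trans (Finset.sum_le_sum hpt) ?_
        rw [Finset.sum_const, smul_eq_mul]
        omega
      have h1 := MvPolynomial.totalDegree_mul
        (MvPolynomial.C (w i))
        (MvPolynomial.X (σ := Fin (n+m)) (Stmt9Aux.auxF n m hn (i + K i)) *
         (MvPolynomial.X (Stmt9Aux.auxF n m hn (n + m - 1)) *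
          ∏ j ∈ Finset.univ.filter (fun j : Fin m => K i < (j : ℕ) ∧ (j : ℕ) < m - 1),
            (MvPolynomial.X (Stmt9Aux.auxF n m hn (ι j - 1)) *
             MvPolynomial.X (Stmt9Aux.auxF n m hn (ι j)))))
      have h2 := MvPolynomial.totalDegree_mul
        (MvPolynomial.X (σ := Fin (n+m)) (R := ℝ) (Stmt9Aux.auxF n m hn (i + K i)))
        (MvPolynomial.X (Stmt9Aux.auxF n m hn (n + m - 1)) *
         ∏ j ∈ Finset.univ.filter (fun j : Fin m => K i < (j : ℕ) ∧ (j : ℕ) < m - 1),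
           (MvPolynomial.X (Stmt9Aux.auxF n m hn (ι j - 1)) *
            MvPolynomial.X (Stmt9Aux.auxF n m hn (ι j))))
      have h3 := MvPolynomial.totalDegree_mul
        (MvPolynomial.X (σ := Fin (n+m)) (R := ℝ) (Stmt9Aux.auxF n m hn (n + m - 1)))
        (∏ j ∈ Finset.univ.filter (fun j : Fin m => K i < (j : ℕ) ∧ (j : ℕ) < m - 1),
           (MvPolynomial.X (Stmt9Aux.auxF n m hn (ι j - 1)) *
            MvPolynomial.X (Stmt9Aux.auxF n m hn (ι j))))
      rw [MvPolynomial.totalDegree_C] at h1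
      rw [MvPolynomial.totalDegree_X] at h2 h3
      omega
  · -- evaluation identity
    intro b c hb hc
    obtain ⟨hc1, hc2, hc3⟩ := hc
    obtain ⟨Φ, hΦdef⟩ : ∃ f : ℕ → ℤ,
        f = fun t => ∏ k ∈ Finset.Icc t (n+m), (2 * b k - 1) := ⟨_, rfl⟩
    have hΦ : ∀ t, Φ t = ∏ k ∈ Finset.Icc t (n+m), (2 * b k - 1) := by
      intro t; rw [hΦdef]
    have hbb : ∀ k, (2 * b k - 1) * (2 * b k - 1) = 1 := by
      intro k; rcases hb k with h | h <;> rw [h] <;> norm_num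
    have hΦsq : ∀ t, Φ t * Φ t = 1 := by
      intro t
      rw [hΦ, ← Finset.prod_mul_distrib]
      exact Finset.prod_eq_one fun k _ => hbb k
    have hΦstep : ∀ t, 1 ≤ t → t ≤ n + m → Φ t = (2 * b t - 1) * Φ (t+1) := by
      intro t h1 h2
      rw [hΦ, hΦ]
      rw [show Finset.Icc t (n+m) = insert t (Finset.Icc (t+1) (n+m)) from by
        ext x; simp only [Finset.mem_Icc, Finset.mem_insert]; omega]
      rw [Finset.prod_insert (by simp only [Finset.mem_Icc]; omega)]
    have hΦtop : Φ (n+m+1) = 1 := by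
      rw [hΦ, Finset.Icc_eq_empty (by omega)]
      exact Finset.prod_empty
    have hΦnm : Φ (n+m) = 2 * b (n+m) - 1 := by
      rw [hΦ, Finset.Icc_self, Finset.prod_singleton]
    obtain ⟨G, hGdef⟩ : ∃ g : ℕ → ℤ,
        g = fun s => ∏ j ∈ Finset.univ.filter (fun j : Fin m => s < (j : ℕ)),
          (2 * b (ι j) - 1) := ⟨_, rfl⟩
    have hG : ∀ s, G s = ∏ j ∈ Finset.univ.filter (fun j : Fin m => s < (j : ℕ)),
        (2 * b (ι j) - 1) := by intro s; rw [hGdef]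
    have hGsq : ∀ s, G s * G s = 1 := by
      intro s
      rw [hG, ← Finset.prod_mul_distrib]
      exact Finset.prod_eq_one fun j _ => hbb _
    have hci : ∀ i, 1 ≤ i → i ≤ n → c i = b (i + K i + 1) := by
      intro i h1 h2
      have hk1 : K i + 1 ≤ m - 1 := hKlt i h1 h2
      have hsp := hKspec i h1
      have hgt := hKgt i (K i + 1) (by omega) hk1
      have ha : ι ⟨K i, by omega⟩ < i + K i + 1 :=
        lt_of_le_of_lt (le_of_eq (hIIe (K i) (by omega)).symm) (by omega)
      have hb' : i + K i + 1 < ι ⟨K i + 1, by omega⟩ :=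
        lt_of_lt_of_le (show i + K i + 1 < II (K i + 1) from by omega)
          (le_of_eq (hIIe (K i + 1) (by omega)))
      have h := hc2 (K i) hk1 (i + K i + 1) ha hb'
      rw [show i + K i + 1 - (K i + 1) = i from by omega] at h
      exact h
    have Qmain : ∀ d, d ≤ n →
        (∏ k ∈ Finset.Icc (n+1-d) n, (2 * c k - 1)) * G (K (n+1-d))
          = Φ ((n+1-d) + K (n+1-d) + 1) := by
      intro d
      induction d with
      | zero =>
        intro _
        simp only [Nat.sub_zero]
        rw [Finset.Icc_eq_empty (by omega), Finset.prod_empty, one_mul]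
        rw [hKtop]
        rw [hG]
        rw [Finset.filter_false_of_mem (fun j _ => by have := j.isLt; omega)]
        rw [Finset.prod_empty]
        rw [show n + 1 + (m-1) + 1 = n + m + 1 from by omega]
        exact hΦtop.symm
      | succ d ih =>
        intro hd
        have hidx : n + 1 - (d+1) = n - d := by omega
        rw [hidx]
        have h1 : 1 ≤ n - d := by omega
        have h2 : n - d ≤ n := by omega
        have hIH := ih (by omega)
        rw [show n + 1 - d = n - d + 1 from by omega] at hIH
        have hins : Finset.Icc (n-d) n = insert (n-d) (Finset.Icc (n-d+1) n) := by
          ext x; simp only [Finset.mem_Icc, Finset.mem_insert]; omega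
        rw [hins, Finset.prod_insert (by simp only [Finset.mem_Icc]; omega)]
        rw [hci (n-d) h1 h2]
        have hub := hσub (n-d) h1 h2
        rcases hstep2 (n-d) h1 h2 with ⟨hk, hne⟩ | ⟨hk, hgv⟩
        · rw [hk] at hIH
          rw [show n - d + 1 + K (n-d) + 1 = n - d + K (n-d) + 1 + 1 from by omega] at hIH
          rw [hΦstep (n - d + K (n-d) + 1) (by omega) (by omega)]
          rw [← hIH]
          ring
        · rw [hk] at hIH
          rw [show n - d + 1 + (K (n-d) + 1) + 1 = n - d + K (n-d) + 1 + 1 + 1 from by omega]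
            at hIH
          have hpfi : K (n-d) + 1 < m := by have := hKlt (n-d) h1 h2; omega
          have hGsplit : G (K (n-d)) =
              (2 * b (ι ⟨K (n-d) + 1, hpfi⟩) - 1) * G (K (n-d) + 1) := by
            rw [hG, hG]
            rw [show Finset.univ.filter (fun j : Fin m => K (n-d) < (j : ℕ)) =
                insert (⟨K (n-d) + 1, hpfi⟩ : Fin m)
                  (Finset.univ.filter (fun j : Fin m => K (n-d) + 1 < (j : ℕ))) from by
              ext j
              simp only [Finset.mem_filter, Finset.mem_insert, Finset.mem_univ, true_and,
                Fin.ext_iff]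
              omega]
            rw [Finset.prod_insert (by simp)]
          have hbv : ι (⟨K (n-d) + 1, hpfi⟩ : Fin m) = n - d + K (n-d) + 1 + 1 := by
            rw [← hIIe (K (n-d) + 1) hpfi]
            omega
          rw [hGsplit, hbv]
          rw [hΦstep (n - d + K (n-d) + 1) (by omega) (by omega)]
          rw [hΦstep (n - d + K (n-d) + 1 + 1) (by omega) (by omega)]
          rw [← hIH]
          ring
    have hforms : ∀ i, 1 ≤ i → i ≤ n →
        (∏ k ∈ Finset.Icc i n, (2 * c k - 1)) = Φ (i + K i + 1) * G (K i) := by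
      intro i h1 h2
      have hq := Qmain (n + 1 - i) (by omega)
      rw [show n + 1 - (n + 1 - i) = i from by omega] at hq
      calc (∏ k ∈ Finset.Icc i n, (2 * c k - 1))
          = ((∏ k ∈ Finset.Icc i n, (2 * c k - 1)) * G (K i)) * G (K i) := by
            rw [mul_assoc, hGsq, mul_one]
        _ = Φ (i + K i + 1) * G (K i) := by rw [hq]
    have hGexp : ∀ i, 1 ≤ i → i ≤ n → G (K i) = Φ (n+m) *
        ∏ j ∈ Finset.univ.filter (fun j : Fin m => K i < (j : ℕ) ∧ (j : ℕ) < m - 1),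
          (Φ (ι j) * Φ (ι j + 1)) := by
      intro i h1 h2
      have hk1 : K i + 1 ≤ m - 1 := hKlt i h1 h2
      rw [hG]
      rw [show Finset.univ.filter (fun j : Fin m => K i < (j : ℕ)) =
          insert (⟨m-1, hpfm⟩ : Fin m)
            (Finset.univ.filter (fun j : Fin m => K i < (j : ℕ) ∧ (j : ℕ) < m - 1)) from by
        ext j
        simp only [Finset.mem_filter, Finset.mem_insert, Finset.mem_univ, true_and,
          Fin.ext_iff]
        have := j.isLt
        omega]
      rw [Finset.prod_insert (by simp)]
      congr 1
      · rw [hΦnm]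
        have hv : ι (⟨m-1, hpfm⟩ : Fin m) = n + m := hlast1
        rw [hv]
      · refine Finset.prod_congr rfl ?_
        intro j hj
        simp only [Finset.mem_filter, Finset.mem_univ, true_and] at hj
        have hjm : (j : ℕ) ≤ m - 1 := by have := j.isLt; omega
        have hjv1 : 1 ≤ ι j := by
          rw [← hIIj j]
          have h0 := hmon 0 (j : ℕ) (Nat.zero_le _) hjm
          omega
        have hjv2 : ι j ≤ n + m - 2 := by
          rw [← hIIj j]
          have h0 := hmon (j : ℕ) (m-1) (by omega) (le_refl _)
          omega
        have hst := hΦstep (ι j) hjv1 (by omega)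
        calc 2 * b (ι j) - 1
            = (2 * b (ι j) - 1) * (Φ (ι j + 1) * Φ (ι j + 1)) := by
              rw [hΦsq, mul_one]
          _ = Φ (ι j) * Φ (ι j + 1) := by rw [hst]; ring
    -- final evaluation
    simp only [map_add, map_sum, map_mul, MvPolynomial.eval_C, MvPolynomial.eval_X,
      map_prod]
    congr 1
    refine Finset.sum_congr rfl ?_
    intro i hi
    simp only [Finset.mem_Icc] at hi
    have hub := hσub i hi.1 hi.2
    rw [Stmt9Aux.auxF_val n m hn (i + K i) (by omega)]
    rw [Stmt9Aux.auxF_val n m hn (n + m - 1) (le_refl _)]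
    rw [show n + m - 1 + 1 = n + m from by omega]
    have hprodeq : ∀ j ∈ Finset.univ.filter
        (fun j : Fin m => K i < (j : ℕ) ∧ (j : ℕ) < m - 1),
        ((∏ k ∈ Finset.Icc (((Stmt9Aux.auxF n m hn (ι j - 1) : Fin (n+m)) : ℕ) + 1) (n+m),
            (2 * b k - 1) : ℤ) : ℝ) *
        ((∏ k ∈ Finset.Icc (((Stmt9Aux.auxF n m hn (ι j) : Fin (n+m)) : ℕ) + 1) (n+m),
            (2 * b k - 1) : ℤ) : ℝ)
          = ((Φ (ι j) : ℤ) : ℝ) * ((Φ (ι j + 1) : ℤ) : ℝ) := by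
      intro j hj
      simp only [Finset.mem_filter, Finset.mem_univ, true_and] at hj
      have hjm : (j : ℕ) ≤ m - 1 := by have := j.isLt; omega
      have hjv1 : 1 ≤ ι j := by
        rw [← hIIj j]
        have h0 := hmon 0 (j : ℕ) (Nat.zero_le _) hjm
        omega
      have hjv2 : ι j ≤ n + m - 2 := by
        rw [← hIIj j]
        have h0 := hmon (j : ℕ) (m-1) (by omega) (le_refl _)
        omega
      rw [Stmt9Aux.auxF_val n m hn (ι j - 1) (by omega)]
      rw [Stmt9Aux.auxF_val n m hn (ι j) (by omega)]
      rw [show ι j - 1 + 1 = ι j from by omega]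
      rw [hΦ (ι j), hΦ (ι j + 1)]
    rw [Finset.prod_congr rfl hprodeq]
    rw [← hΦ (i + K i + 1), ← hΦ (n + m)]
    rw [hforms i hi.1 hi.2, hGexp i hi.1 hi.2]
    push_cast
    ring
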